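/- Let n ≥ 3 be an integer. The constant ((n−2)/2)² in the Schwarzschild Hardy inequality is sharp: for every c > 0 such that ∫₁^∞ g'(r)² r^{n−1} √((r^{n−2}−1)/r^{n−2}) dr ≥ c ∫₁^∞ (g(r)²/δ(r)²) r^{n−1} √(r^{n−2}/(r^{n−2}−1)) dr holds for all locally absolutely continuous g : (1,∞) → ℝ with g(r)(r−1)^{−1/4} → 0 as r → 1⁺ and g(r) r^{−(n−2)/2} → 0 as r → ∞, one has c ≤ ((n−2)/2)². Equivalently, for every ε > 0 there exists such an admissible function g, not identically zero, with ∫₁^∞ g'² r^{n−1} √((r^{n−2}−1)/r^{n−2}) dr < (((n−2)/2)² + ε) ∫₁^∞ (g²/δ²) r^{n−1} √(r^{n−2}/(r^{n−2}−1)) dr. -/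

import Mathlib

open MeasureTheory Filter

noncomputable def schR (n : ℕ) : ℝ := ((4 : ℝ) / 3) ^ (((n : ℝ) - 2)⁻¹)

/-- The weight function `δ` of the Schwarzschild Hardy inequality. -/
noncomputable def schDelta (n : ℕ) (r : ℝ) : ℝ :=
  if r < schR n then 2 * r ^ (n - 1) * Real.sqrt ((r ^ (n - 2) - 1) / r ^ (n - 2))
  else 2 * r ^ (n - 1) * (1 - Real.sqrt ((r ^ (n - 2) - 1) / r ^ (n - 2)))

open Set Real
open scoped ENNReal

noncomputable def tg (α : ℝ) (r : ℝ) : ℝ := (r - 1) * r ^ (-(α + 1))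
noncomputable def tD (α : ℝ) (r : ℝ) : ℝ := ((α + 1) - α * r) * r ^ (-(α + 2))

lemma tg_hasDerivAt (α : ℝ) {r : ℝ} (hr : 0 < r) : HasDerivAt (tg α) (tD α r) r := by
  have h1 : HasDerivAt (fun r : ℝ => r - 1) 1 r := (hasDerivAt_id r).sub_const 1
  have h2 : HasDerivAt (fun r : ℝ => r ^ (-(α + 1))) (-(α + 1) * r ^ (-(α + 1) - 1)) r :=
    Real.hasDerivAt_rpow_const (Or.inl hr.ne')
  have h3 := h1.mul h2
  have h4 : HasDerivAt (tg α) (1 * r ^ (-(α + 1)) + (r - 1) * (-(α + 1) * r ^ (-(α + 1) - 1))) r := h3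
  convert h4 using 1
  have e1 : -(α + 1) - 1 = -(α + 2) := by ring
  have e2 : r ^ (-(α + 1)) = r * r ^ (-(α + 2)) := by
    have := Real.rpow_add hr 1 (-(α + 2))
    rw [Real.rpow_one] at this
    rw [← this]
    ring_nf
  rw [e1, e2]
  unfold tD
  ring

lemma tg_deriv (α : ℝ) {r : ℝ} (hr : 0 < r) : deriv (tg α) r = tD α r :=
  (tg_hasDerivAt α hr).deriv

lemma tD_contOn (α : ℝ) : ContinuousOn (tD α) (Set.Ioi 0) := by
  apply ContinuousOn.mul
  · fun_prop
  · intro x hx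
    exact (Real.continuousAt_rpow_const x _ (Or.inl (ne_of_gt hx))).continuousWithinAt

lemma tg_ftc (α : ℝ) (a b : ℝ) (ha : 1 < a) (hab : a ≤ b) :
    MeasureTheory.IntegrableOn (deriv (tg α)) (Set.Icc a b) ∧
      ∀ x ∈ Set.Icc a b, tg α x = tg α a + ∫ t in a..x, deriv (tg α) t := by
  have hsub : Set.Icc a b ⊆ Set.Ioi 0 := fun x hx => lt_of_lt_of_le (by linarith) hx.1
  have hInt : MeasureTheory.IntegrableOn (deriv (tg α)) (Set.Icc a b) := by
    refine (((tD_contOn α).mono hsub).integrableOn_Icc).congr_fun ?_ measurableSet_Icc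
    intro x hx
    exact (tg_deriv α (hsub hx)).symm
  refine ⟨hInt, fun x hx => ?_⟩
  have hax : a ≤ x := hx.1
  have key : ∫ t in a..x, deriv (tg α) t = tg α x - tg α a := by
    apply intervalIntegral.integral_eq_sub_of_hasDerivAt
    · intro t ht
      rw [Set.uIcc_of_le hax] at ht
      have h0 : 0 < t := lt_of_lt_of_le (by linarith) ht.1
      rw [tg_deriv α h0]
      exact tg_hasDerivAt α h0
    · apply MeasureTheory.IntegrableOn.intervalIntegrable
      rw [Set.uIcc_of_le hax]
      exact hInt.mono_set (Set.Icc_subset_Icc le_rfl hx.2)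
  rw [key]; ring

lemma tg_lim_one (α : ℝ) :
    Tendsto (fun r : ℝ => tg α r * (r - 1) ^ (-(1 : ℝ) / 4)) (nhdsWithin 1 (Set.Ioi 1))
      (nhds 0) := by
  have main : Tendsto (fun r : ℝ => (r - 1) ^ ((3 : ℝ) / 4) * r ^ (-(α + 1)))
      (nhdsWithin 1 (Set.Ioi 1)) (nhds 0) := by
    have h1 : Tendsto (fun r : ℝ => (r - 1) ^ ((3 : ℝ) / 4)) (nhdsWithin 1 (Set.Ioi 1))
        (nhds 0) := by
      have hc : Tendsto (fun r : ℝ => r - 1) (nhdsWithin 1 (Set.Ioi 1)) (nhds 0) := by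
        have hcont : Continuous (fun r : ℝ => r - 1) := by continuity
        have := hcont.tendsto (1 : ℝ)
        simpa using this.mono_left nhdsWithin_le_nhds
      have hr : ContinuousAt (fun x : ℝ => x ^ ((3 : ℝ) / 4)) 0 :=
        Real.continuousAt_rpow_const 0 _ (Or.inr (by norm_num))
      have := hr.tendsto.comp hc
      simpa [Function.comp_def, Real.zero_rpow (by norm_num : (3:ℝ)/4 ≠ 0)] using this
    have h2 : Tendsto (fun r : ℝ => r ^ (-(α + 1))) (nhdsWithin 1 (Set.Ioi 1)) (nhds 1) := by
      have hr : ContinuousAt (fun x : ℝ => x ^ (-(α + 1))) 1 :=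
        Real.continuousAt_rpow_const 1 _ (Or.inl one_ne_zero)
      have := hr.tendsto.mono_left (nhdsWithin_le_nhds (s := Set.Ioi (1:ℝ)))
      simpa [Real.one_rpow] using this
    simpa using h1.mul h2
  refine main.congr' ?_
  filter_upwards [self_mem_nhdsWithin] with r hr
  have hr1 : (0 : ℝ) < r - 1 := by simpa using hr
  unfold tg
  have : (r - 1) ^ ((3:ℝ)/4) = (r - 1) * (r - 1) ^ (-(1:ℝ)/4) := by
    have := Real.rpow_add hr1 1 (-(1:ℝ)/4)
    rw [Real.rpow_one] at this
    rw [← this]; norm_num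
  rw [this]; ring

lemma tg_lim_top (α β : ℝ) (hαβ : 0 < α + β) :
    Tendsto (fun r : ℝ => tg α r * r ^ (-β)) atTop (nhds 0) := by
  have hg : Tendsto (fun r : ℝ => r ^ (-(α + β))) atTop (nhds 0) :=
    tendsto_rpow_neg_atTop hαβ
  apply squeeze_zero' (g := fun r : ℝ => r ^ (-(α + β))) (t₀ := atTop) ?_ ?_ hg
  · filter_upwards [eventually_ge_atTop (1:ℝ)] with r hr
    unfold tg
    have h1 : (0:ℝ) ≤ r - 1 := by linarith
    have h2 : (0:ℝ) ≤ r := by linarith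
    exact mul_nonneg (mul_nonneg h1 (Real.rpow_nonneg h2 _)) (Real.rpow_nonneg h2 _)
  · filter_upwards [eventually_ge_atTop (1:ℝ)] with r hr
    have hr0 : (0:ℝ) < r := by linarith
    unfold tg
    have e1 : r ^ (-(α+1)) * r ^ (-β) = r ^ (-(α+1) + -β) := (Real.rpow_add hr0 _ _).symm
    have e2 : r * r ^ (-(α+1) + -β) = r ^ (-(α + β)) := by
      have := Real.rpow_add hr0 1 (-(α+1) + -β)
      rw [Real.rpow_one] at this
      rw [← this]; ring_nf
    calc (r - 1) * r ^ (-(α + 1)) * r ^ (-β) = (r - 1) * (r ^ (-(α+1)) * r ^ (-β)) := by ring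
      _ ≤ r * (r ^ (-(α+1)) * r ^ (-β)) := by
          apply mul_le_mul_of_nonneg_right (by linarith) (by positivity)
      _ = r ^ (-(α + β)) := by rw [e1]; exact e2

lemma lhs_pointwise (n : ℕ) (hn : 3 ≤ n) (ε : ℝ) (hε : 0 < ε) (α : ℝ)
    (hα2 : 2 * α = (n:ℝ) - 2 + ε) {r : ℝ} (hr : 1 < r) :
    tD α r ^ 2 * r ^ (n-1) * Real.sqrt ((r^(n-2)-1)/r^(n-2))
      ≤ α^2 * r ^ (-1-ε) + (α+1)^2 * r ^ (-(3:ℝ)) := by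
  have hr0 : (0:ℝ) < r := by linarith
  have hn2 : (1:ℝ) ≤ (n:ℝ) - 2 := by
    have : (3:ℝ) ≤ (n:ℝ) := by exact_mod_cast hn
    linarith
  have hα0 : 0 < α := by linarith
  -- sqrt term ≤ 1
  have hpow : (0:ℝ) < r ^ (n-2) := pow_pos hr0 _
  have hsq : Real.sqrt ((r^(n-2)-1)/r^(n-2)) ≤ 1 := by
    rw [show (1:ℝ) = Real.sqrt 1 by simp]
    apply Real.sqrt_le_sqrt
    rw [div_le_one hpow]
    have h1 : Real.sqrt 1 = 1 := by simp
    linarith [h1]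
  have hsq0 : 0 ≤ Real.sqrt ((r^(n-2)-1)/r^(n-2)) := Real.sqrt_nonneg _
  have hA : (0:ℝ) ≤ tD α r ^ 2 * r ^ (n-1) := by positivity
  have step1 : tD α r ^ 2 * r ^ (n-1) * Real.sqrt ((r^(n-2)-1)/r^(n-2))
      ≤ tD α r ^ 2 * r ^ (n-1) := by
    nth_rewrite 2 [← mul_one (tD α r ^ 2 * r ^ (n-1))]
    exact mul_le_mul_of_nonneg_left hsq hA
  -- rewrite the main quantity
  have hexp : tD α r ^ 2 * r ^ (n-1) = ((α+1) - α*r)^2 * r ^ (-3-ε) := by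
    unfold tD
    have e1 : (r ^ (-(α+2)))^2 = r ^ (-(α+2) + -(α+2)) := by
      rw [sq, ← Real.rpow_add hr0]
    have e2 : (r : ℝ) ^ (n-1) = r ^ ((n:ℝ)-1) := by
      rw [← Real.rpow_natCast r (n-1)]
      congr 1
      have : ((n - 1 : ℕ) : ℝ) = (n:ℝ) - 1 := by
        have : 1 ≤ n := by omega
        push_cast [this]; ring
      rw [this]
    have e3 : r ^ (-(α+2) + -(α+2)) * r ^ ((n:ℝ)-1) = r ^ (-3-ε) := by
      rw [← Real.rpow_add hr0]
      congr 1
      linarith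
    rw [mul_pow, e1, e2, mul_assoc, e3]
  have hbound : ((α+1) - α*r)^2 ≤ (α+1)^2 + α^2 * r^2 := by nlinarith [mul_nonneg hα0.le hr0.le, mul_nonneg (mul_nonneg hα0.le (by linarith : (0:ℝ) ≤ α + 1)) hr0.le]
  have hrpos : (0:ℝ) ≤ r ^ (-3-ε) := Real.rpow_nonneg hr0.le _
  have step2 : ((α+1) - α*r)^2 * r ^ (-3-ε) ≤ (α+1)^2 * r ^ (-3-ε) + α^2 * (r^2 * r ^ (-3-ε)) := by
    have := mul_le_mul_of_nonneg_right hbound hrpos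
    calc ((α+1) - α*r)^2 * r ^ (-3-ε) ≤ ((α+1)^2 + α^2 * r^2) * r ^ (-3-ε) := this
      _ = (α+1)^2 * r ^ (-3-ε) + α^2 * (r^2 * r ^ (-3-ε)) := by ring
  have e4 : r^2 * r ^ (-3-ε) = r ^ (-1-ε) := by
    rw [← Real.rpow_natCast r 2, ← Real.rpow_add hr0]
    norm_num
    ring_nf
  have e5 : r ^ (-3-ε) ≤ r ^ (-(3:ℝ)) :=
    Real.rpow_le_rpow_of_exponent_le hr.le (by linarith)
  calc tD α r ^ 2 * r ^ (n-1) * Real.sqrt ((r^(n-2)-1)/r^(n-2))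
      ≤ tD α r ^ 2 * r ^ (n-1) := step1
    _ = ((α+1) - α*r)^2 * r ^ (-3-ε) := hexp
    _ ≤ (α+1)^2 * r ^ (-3-ε) + α^2 * (r^2 * r ^ (-3-ε)) := step2
    _ ≤ α^2 * r ^ (-1-ε) + (α+1)^2 * r ^ (-(3:ℝ)) := by
        rw [e4]
        have : (α+1)^2 * r ^ (-3-ε) ≤ (α+1)^2 * r ^ (-(3:ℝ)) :=
          mul_le_mul_of_nonneg_left e5 (by positivity)
        linarith

noncomputable def Kc (n : ℕ) (t : ℝ) : ℝ :=
  (1 - 1/t)^2 * (1 + Real.sqrt ((t^(n-2)-1)/t^(n-2)))^2 / 4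

lemma schR_le (n : ℕ) (hn : 3 ≤ n) : schR n ≤ 4/3 := by
  have hn2 : (1:ℝ) ≤ (n:ℝ) - 2 := by
    have : (3:ℝ) ≤ (n:ℝ) := by exact_mod_cast hn
    linarith
  have h1 : ((n:ℝ) - 2)⁻¹ ≤ 1 := by
    rw [inv_le_one_iff₀]; right; linarith
  have := Real.rpow_le_rpow_of_exponent_le (by norm_num : (1:ℝ) ≤ 4/3) h1
  simpa [schR] using this

set_option maxHeartbeats 1000000 in
lemma rhs_pointwise (n : ℕ) (hn : 3 ≤ n) (ε : ℝ) (hε : 0 < ε) (α : ℝ)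
    (hα2 : 2 * α = (n:ℝ) - 2 + ε) (r₀ : ℝ) (hr₀ : 2 ≤ r₀)
    {r : ℝ} (hr : r₀ < r) :
    Kc n r₀ * r ^ (-1-ε)
      ≤ tg α r ^ 2 / schDelta n r ^ 2 * r ^ (n-1)
          * Real.sqrt (r^(n-2)/(r^(n-2)-1)) := by
  have hr2 : (2:ℝ) < r := lt_of_le_of_lt hr₀ hr
  have hr0 : (0:ℝ) < r := by linarith
  have hr1 : (1:ℝ) < r := by linarith
  have hn2 : (1:ℝ) ≤ (n:ℝ) - 2 := by
    have : (3:ℝ) ≤ (n:ℝ) := by exact_mod_cast hn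
    linarith
  have hn2' : n - 2 ≠ 0 := by omega
  -- powers
  have hpow1 : (1:ℝ) < r ^ (n-2) := one_lt_pow₀ hr1 hn2'
  have hpow0 : (0:ℝ) < r ^ (n-2) := by linarith
  have hpow1₀ : (1:ℝ) < r₀ ^ (n-2) := one_lt_pow₀ (by linarith : (1:ℝ) < r₀) hn2'
  have hpow0₀ : (0:ℝ) < r₀ ^ (n-2) := by linarith
  -- δ is in the second branch
  have hbranch : ¬ r < schR n := by
    have := schR_le n hn
    push_neg
    linarith
  set s : ℝ := Real.sqrt ((r^(n-2)-1)/r^(n-2)) with hs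
  set s₀ : ℝ := Real.sqrt ((r₀^(n-2)-1)/r₀^(n-2)) with hs₀
  have hδ : schDelta n r = 2 * r ^ (n-1) * (1 - s) := by
    rw [schDelta, if_neg hbranch]
  -- basic facts about s
  have harg0 : (0:ℝ) ≤ (r^(n-2)-1)/r^(n-2) := div_nonneg (by linarith) hpow0.le
  have hs_nonneg : 0 ≤ s := Real.sqrt_nonneg _
  have hs_lt_one : s < 1 := by
    have h2 : (r^(n-2)-1)/r^(n-2) < 1 := by rw [div_lt_one hpow0]; linarith
    have := Real.sqrt_lt_sqrt harg0 h2
    simpa [hs] using this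
  have hs₀_nonneg : 0 ≤ s₀ := Real.sqrt_nonneg _
  have hs₀_le_s : s₀ ≤ s := by
    apply Real.sqrt_le_sqrt
    rw [div_le_div_iff₀ hpow0₀ hpow0]
    have hle : r₀ ^ (n-2) ≤ r ^ (n-2) := pow_le_pow_left₀ (by linarith) hr.le _
    nlinarith
  have hs_sq : s^2 = (r^(n-2)-1)/r^(n-2) := Real.sq_sqrt harg0
  -- 1 - s = (1/r^(n-2)) / (1+s)
  have hone_sub : 1 - s = (1/r^(n-2)) / (1 + s) := by
    have h1s : (0:ℝ) < 1 + s := by linarith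
    have key : s^2 * r^(n-2) = r^(n-2) - 1 := by
      rw [hs_sq]; field_simp
    field_simp
    nlinarith [key]
  have hδ_pos : 0 < schDelta n r := by
    rw [hδ]
    have : (0:ℝ) < r ^ (n-1) := pow_pos hr0 _
    nlinarith
  -- δ ≤ 2r/(1+s₀)
  have hδ_le : schDelta n r ≤ 2 * r / (1 + s₀) := by
    rw [hδ, hone_sub]
    have h1s : (0:ℝ) < 1 + s := by linarith
    have h1s₀ : (0:ℝ) < 1 + s₀ := by linarith
    have hdiv : (1/r^(n-2)) / (1 + s) ≤ (1/r^(n-2)) / (1 + s₀) :=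
      div_le_div_of_nonneg_left (by positivity) h1s₀ (by linarith)
    have hrn1 : r ^ (n-1) = r ^ (n-2) * r := by
      rw [← pow_succ]
      congr 1
      omega
    calc 2 * r ^ (n-1) * ((1/r^(n-2)) / (1 + s)) ≤ 2 * r ^ (n-1) * ((1/r^(n-2)) / (1 + s₀)) := by
          apply mul_le_mul_of_nonneg_left hdiv (by positivity)
      _ = 2 * r / (1 + s₀) := by
          rw [hrn1]; field_simp
  -- δ² bound
  have hδ_sq : schDelta n r ^ 2 ≤ (2 * r / (1 + s₀)) ^ 2 :=
    pow_le_pow_left₀ hδ_pos.le hδ_le 2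
  -- g lower bound
  have hrpow_nonneg : (0:ℝ) ≤ r ^ (-(α+1)) := Real.rpow_nonneg hr0.le _
  have e_rr : r * r ^ (-(α+1)) = r ^ (-α) := by
    have := Real.rpow_add hr0 1 (-(α+1))
    rw [Real.rpow_one] at this
    rw [← this]; ring_nf
  have hg_lb : (1 - 1/r₀) * r ^ (-α) ≤ tg α r := by
    have h1 : (1 - 1/r₀) * r ≤ r - 1 := by
      have : (1:ℝ) ≤ r / r₀ := (one_le_div (by linarith)).mpr hr.le
      have h2 : (1 - 1/r₀) * r = r - r / r₀ := by field_simp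
      linarith [h2]
    calc (1 - 1/r₀) * r ^ (-α) = ((1 - 1/r₀) * r) * r ^ (-(α+1)) := by
          rw [mul_assoc, e_rr]
      _ ≤ (r - 1) * r ^ (-(α+1)) := mul_le_mul_of_nonneg_right h1 hrpow_nonneg
      _ = tg α r := rfl
  have hg_lb_nonneg : (0:ℝ) ≤ (1 - 1/r₀) * r ^ (-α) := by
    have : (0:ℝ) ≤ 1 - 1/r₀ := by
      have : 1/r₀ ≤ 1/2 := by
        apply div_le_div_of_nonneg_left (by norm_num) (by norm_num) hr₀
      linarith
    positivity
  have hg_sq : ((1 - 1/r₀) * r ^ (-α)) ^ 2 ≤ tg α r ^ 2 :=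
    pow_le_pow_left₀ hg_lb_nonneg hg_lb 2
  -- division bound
  have h1s₀ : (0:ℝ) < 1 + s₀ := by linarith
  have hub_pos : (0:ℝ) < (2 * r / (1 + s₀)) ^ 2 := pow_pos (div_pos (by linarith) h1s₀) 2
  have hdiv_bound : ((1 - 1/r₀) * r ^ (-α)) ^ 2 / (2 * r / (1 + s₀)) ^ 2
      ≤ tg α r ^ 2 / schDelta n r ^ 2 :=
    div_le_div₀ (sq_nonneg _) hg_sq (pow_pos hδ_pos 2) hδ_sq
  -- sqrt factor ≥ 1
  have hS : (1:ℝ) ≤ Real.sqrt (r^(n-2)/(r^(n-2)-1)) := by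
    rw [show (1:ℝ) = Real.sqrt 1 by simp]
    apply Real.sqrt_le_sqrt
    rw [Real.sqrt_one, le_div_iff₀ (by linarith : (0:ℝ) < r^(n-2)-1)]
    linarith
  -- the algebraic identity
  have e2 : (r:ℝ) ^ (n-1) = r ^ ((n:ℝ)-1) := by
    rw [← Real.rpow_natCast r (n-1)]
    congr 1
    have h1 : 1 ≤ n := by omega
    push_cast [h1]; ring
  have eX : (r ^ (-α)) ^ 2 = r ^ (-α + -α) := by rw [sq, ← Real.rpow_add hr0]
  have ecomb : r ^ (-α + -α) / r ^ 2 * r ^ ((n:ℝ)-1) = r ^ (-1-ε) := by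
    rw [← Real.rpow_natCast r 2, div_eq_mul_inv, ← Real.rpow_neg hr0.le,
      ← Real.rpow_add hr0, ← Real.rpow_add hr0]
    congr 1
    push_cast
    linarith
  have halg : ((1 - 1/r₀) * r ^ (-α)) ^ 2 / (2 * r / (1 + s₀)) ^ 2 * r ^ (n-1)
      = Kc n r₀ * r ^ (-1-ε) := by
    have hKc : Kc n r₀ = (1 - 1/r₀)^2 * (1 + s₀)^2 / 4 := by
      rw [Kc, hs₀]
    rw [hKc, ← ecomb, ← eX, ← e2]
    field_simp
    ring
  -- final chain
  have hmain_nonneg : (0:ℝ) ≤ tg α r ^ 2 / schDelta n r ^ 2 * r ^ (n-1) :=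
    mul_nonneg (div_nonneg (sq_nonneg _) (sq_nonneg _)) (pow_nonneg hr0.le _)
  calc Kc n r₀ * r ^ (-1-ε)
      = ((1 - 1/r₀) * r ^ (-α)) ^ 2 / (2 * r / (1 + s₀)) ^ 2 * r ^ (n-1) := halg.symm
    _ ≤ tg α r ^ 2 / schDelta n r ^ 2 * r ^ (n-1) :=
        mul_le_mul_of_nonneg_right hdiv_bound (pow_nonneg hr0.le _)
    _ ≤ tg α r ^ 2 / schDelta n r ^ 2 * r ^ (n-1) * Real.sqrt (r^(n-2)/(r^(n-2)-1)) := by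
        nth_rewrite 1 [← mul_one (tg α r ^ 2 / schDelta n r ^ 2 * r ^ (n-1))]
        exact mul_le_mul_of_nonneg_left hS hmain_nonneg

lemma schDelta_measurable (n : ℕ) : Measurable (schDelta n) := by
  unfold schDelta
  apply Measurable.ite (measurableSet_lt measurable_id measurable_const) <;> fun_prop

lemma rhs_integrand_measurable (n : ℕ) (α : ℝ) :
    Measurable (fun r : ℝ => ENNReal.ofReal (tg α r ^ 2 / schDelta n r ^ 2 * r ^ (n-1)
      * Real.sqrt (r^(n-2)/(r^(n-2)-1)))) := by
  apply ENNReal.measurable_ofReal.comp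
  apply Measurable.mul
  apply Measurable.mul
  · apply Measurable.div
    · apply Measurable.pow _ measurable_const
      unfold tg
      fun_prop
    · exact (schDelta_measurable n).pow measurable_const
  · fun_prop
  · fun_prop

lemma lint_rpow (p : ℝ) (hp : p < -1) (a : ℝ) (ha : 0 < a) (C : ℝ) (hC : 0 ≤ C) :
    ∫⁻ r in Set.Ioi a, ENNReal.ofReal (C * r ^ p)
      = ENNReal.ofReal (C * (-a ^ (p+1) / (p+1))) := by
  have hInt : Integrable (fun r : ℝ => C * r ^ p) (volume.restrict (Set.Ioi a)) :=
    (integrableOn_Ioi_rpow_of_lt hp ha).const_mul C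
  rw [← ofReal_integral_eq_lintegral_ofReal hInt]
  · congr 1
    rw [integral_const_mul, integral_Ioi_rpow_of_lt hp ha]
  · filter_upwards [ae_restrict_mem measurableSet_Ioi] with r hr
    exact mul_nonneg hC (Real.rpow_nonneg (le_of_lt (lt_trans ha hr)) _)

lemma lint_lhs (ε : ℝ) (hε : 0 < ε) (A B : ℝ) (hA : 0 ≤ A) (hB : 0 ≤ B) :
    ∫⁻ r in Set.Ioi (1:ℝ), ENNReal.ofReal (A * r ^ (-1-ε) + B * r ^ (-(3:ℝ)))
      = ENNReal.ofReal (A / ε + B / 2) := by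
  have h1 : (-1-ε : ℝ) < -1 := by linarith
  have h3 : (-(3:ℝ) : ℝ) < -1 := by norm_num
  have hI1 : Integrable (fun r : ℝ => A * r ^ (-1-ε)) (volume.restrict (Set.Ioi (1:ℝ))) :=
    (integrableOn_Ioi_rpow_of_lt h1 one_pos).const_mul A
  have hI3 : Integrable (fun r : ℝ => B * r ^ (-(3:ℝ))) (volume.restrict (Set.Ioi (1:ℝ))) :=
    (integrableOn_Ioi_rpow_of_lt h3 one_pos).const_mul B
  have hI : Integrable (fun r : ℝ => A * r ^ (-1-ε) + B * r ^ (-(3:ℝ)))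
      (volume.restrict (Set.Ioi (1:ℝ))) := hI1.add hI3
  rw [← ofReal_integral_eq_lintegral_ofReal hI]
  · congr 1
    rw [integral_add hI1 hI3, integral_const_mul, integral_const_mul,
      integral_Ioi_rpow_of_lt h1 one_pos, integral_Ioi_rpow_of_lt h3 one_pos]
    rw [Real.one_rpow, Real.one_rpow]
    rw [show (-1 - ε + 1 : ℝ) = -ε by ring, show (-3 + 1 : ℝ) = -2 by norm_num,
      div_neg, div_neg]
    field_simp
  · filter_upwards [ae_restrict_mem measurableSet_Ioi] with r hr
    have hr0 : (0:ℝ) ≤ r := le_of_lt (lt_trans one_pos hr)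
    exact add_nonneg (mul_nonneg hA (Real.rpow_nonneg hr0 _))
      (mul_nonneg hB (Real.rpow_nonneg hr0 _))

lemma Kc_tendsto (n : ℕ) (hn : 3 ≤ n) : Tendsto (fun t : ℝ => Kc n t) atTop (nhds 1) := by
  have hn2' : n - 2 ≠ 0 := by omega
  have h1 : Tendsto (fun t : ℝ => 1 - 1/t) atTop (nhds 1) := by
    have := tendsto_inv_atTop_zero (𝕜 := ℝ)
    have h := (tendsto_const_nhds (x := (1:ℝ)) (f := atTop)).sub this
    simpa [one_div] using h
  have h2 : Tendsto (fun t : ℝ => (t^(n-2)-1)/t^(n-2)) atTop (nhds 1) := by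
    have hpow : Tendsto (fun t : ℝ => t^(n-2)) atTop atTop :=
      tendsto_pow_atTop hn2'
    have hinv : Tendsto (fun t : ℝ => (t^(n-2))⁻¹) atTop (nhds 0) :=
      hpow.inv_tendsto_atTop
    have h := (tendsto_const_nhds (x := (1:ℝ)) (f := atTop)).sub hinv
    rw [sub_zero] at h
    apply h.congr'
    filter_upwards [eventually_gt_atTop (0:ℝ)] with t ht
    have : t ^ (n-2) ≠ 0 := (pow_pos ht _).ne'
    field_simp
  have h3 : Tendsto (fun t : ℝ => Real.sqrt ((t^(n-2)-1)/t^(n-2))) atTop (nhds 1) := by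
    have := (Real.continuous_sqrt.tendsto 1).comp h2
    simpa [Function.comp_def] using this
  have h4 : Tendsto (fun t : ℝ => (1 - 1/t)^2 * (1 + Real.sqrt ((t^(n-2)-1)/t^(n-2)))^2 / 4)
      atTop (nhds ((1:ℝ)^2 * (1+1)^2 / 4)) := by
    exact (((h1.pow 2).mul (((tendsto_const_nhds).add h3).pow 2)).div_const 4)
  have : (1:ℝ)^2 * (1+1)^2 / 4 = 1 := by norm_num
  rw [this] at h4
  exact h4.congr (fun t => rfl)


/-- sharpness of the constant `((n−2)/2)²` in the radial Schwarzschild Hardy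
inequality: any constant `c > 0` for which the Hardy inequality holds for all admissible
functions (locally absolutely continuous on `(1,∞)`, encoded via the fundamental theorem of
calculus characterization, with `g(r)(r−1)^(−1/4) → 0` as `r → 1⁺` and
`g(r) r^(−(n−2)/2) → 0` as `r → ∞`) satisfies `c ≤ ((n−2)/2)²`. -/
theorem schwarzschild_hardy_sharp (n : ℕ) (hn : 3 ≤ n) (c : ℝ) (hc : 0 < c)
    (h : ∀ g : ℝ → ℝ,
      (∀ a b : ℝ, 1 < a → a ≤ b →
        MeasureTheory.IntegrableOn (deriv g) (Set.Icc a b) ∧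
        ∀ x ∈ Set.Icc a b, g x = g a + ∫ t in a..x, deriv g t) →
      Filter.Tendsto (fun r : ℝ => g r * (r - 1) ^ (-(1 : ℝ) / 4))
        (nhdsWithin 1 (Set.Ioi 1)) (nhds 0) →
      Filter.Tendsto (fun r : ℝ => g r * r ^ (-((n : ℝ) - 2) / 2))
        Filter.atTop (nhds 0) →
      ∫⁻ r in Set.Ioi (1 : ℝ),
          ENNReal.ofReal (deriv g r ^ 2 * r ^ (n - 1)
            * Real.sqrt ((r ^ (n - 2) - 1) / r ^ (n - 2)))
        ≥ ENNReal.ofReal c *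
          ∫⁻ r in Set.Ioi (1 : ℝ),
            ENNReal.ofReal (g r ^ 2 / schDelta n r ^ 2 * r ^ (n - 1)
              * Real.sqrt (r ^ (n - 2) / (r ^ (n - 2) - 1)))) :
    c ≤ (((n : ℝ) - 2) / 2) ^ 2 := by
  by_contra hcon
  push_neg at hcon
  set β : ℝ := ((n : ℝ) - 2) / 2 with hβ
  have hn3 : (3:ℝ) ≤ (n:ℝ) := by exact_mod_cast hn
  have hβpos : 0 < β := by rw [hβ]; linarith
  set m : ℝ := (β^2 + c) / 2 with hm
  have hmβ : β^2 < m := by rw [hm]; nlinarith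
  have hmc : m < c := by rw [hm]; nlinarith
  have hm0 : 0 < m := by nlinarith
  -- choose r₀
  have hKev : ∀ᶠ t in atTop, m / c < Kc n t := by
    apply (Kc_tendsto n hn).eventually
    apply eventually_gt_nhds
    rw [div_lt_one hc]
    exact hmc
  obtain ⟨r₀, hr₀2, hKr₀⟩ := ((eventually_ge_atTop (2:ℝ)).and hKev).exists
  have hr₀pos : (0:ℝ) < r₀ := by linarith
  have hKpos : 0 < Kc n r₀ := lt_trans (div_pos hm0 hc) hKr₀
  have hmcK : m < c * Kc n r₀ := by
    rw [div_lt_iff₀ hc] at hKr₀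
    linarith [hKr₀]
  -- choose ε
  set F : ℝ → ℝ := fun e => m * r₀ ^ (-e) - ((β + e/2)^2 + e * ((β + e/2) + 1)^2 / 2) with hF
  have hFcont : Continuous F := by
    have hrw : (fun e : ℝ => r₀ ^ (-e)) = fun e => Real.exp (Real.log r₀ * (-e)) :=
      funext fun e => Real.rpow_def_of_pos hr₀pos (-e)
    have hexp_cont : Continuous (fun e : ℝ => r₀ ^ (-e)) := by
      rw [hrw]
      exact Real.continuous_exp.comp (continuous_const.mul continuous_neg)
    have hpoly : Continuous (fun e : ℝ => (β + e/2)^2 + e * ((β + e/2) + 1)^2 / 2) := by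
      fun_prop
    rw [hF]
    exact (continuous_const.mul hexp_cont).sub hpoly
  have hF0 : 0 < F 0 := by
    simp only [hF, Real.rpow_zero, neg_zero]
    simp
    nlinarith
  have hFev : ∀ᶠ e in nhdsWithin 0 (Set.Ioi (0:ℝ)), 0 < F e := by
    apply Filter.Eventually.filter_mono nhdsWithin_le_nhds
    exact (hFcont.tendsto 0).eventually (eventually_gt_nhds hF0)
  obtain ⟨ε, hFε, hε'⟩ := (hFev.and self_mem_nhdsWithin).exists
  have hε : (0:ℝ) < ε := hε'
  set α : ℝ := β + ε/2 with hα
  have hα2 : 2 * α = (n:ℝ) - 2 + ε := by rw [hα, hβ]; ring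
  have hαpos : 0 < α := by rw [hα]; linarith
  -- the key real inequality from F ε > 0
  have hkey : α^2 + ε * (α+1)^2 / 2 < m * r₀ ^ (-ε) := by
    have : F ε = m * r₀ ^ (-ε) - ((β + ε/2)^2 + ε * ((β + ε/2) + 1)^2 / 2) := rfl
    rw [this] at hFε
    rw [hα]
    linarith
  -- apply the hypothesis to tg α
  have hlim2 : Filter.Tendsto (fun r : ℝ => tg α r * r ^ (-((n : ℝ) - 2) / 2))
      Filter.atTop (nhds 0) := by
    have := tg_lim_top α β (by linarith)
    have hex : -((n : ℝ) - 2) / 2 = -β := by rw [hβ]; ring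
    rw [hex]
    exact this
  have hmain := h (tg α) (fun a b ha hab => tg_ftc α a b ha hab) (tg_lim_one α) hlim2
  -- upper bound for the LHS
  set A : ℝ := α^2 / ε + (α+1)^2 / 2 with hA
  have hLHS : (∫⁻ r in Set.Ioi (1 : ℝ),
      ENNReal.ofReal (deriv (tg α) r ^ 2 * r ^ (n - 1)
        * Real.sqrt ((r ^ (n - 2) - 1) / r ^ (n - 2)))) ≤ ENNReal.ofReal A := by
    have hb : (∫⁻ r in Set.Ioi (1 : ℝ),
        ENNReal.ofReal (deriv (tg α) r ^ 2 * r ^ (n - 1)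
          * Real.sqrt ((r ^ (n - 2) - 1) / r ^ (n - 2))))
        ≤ ∫⁻ r in Set.Ioi (1:ℝ),
            ENNReal.ofReal (α^2 * r ^ (-1-ε) + (α+1)^2 * r ^ (-(3:ℝ))) := by
      apply setLIntegral_mono
      · exact ENNReal.measurable_ofReal.comp (by fun_prop)
      · intro r hr
        rw [Set.mem_Ioi] at hr
        apply ENNReal.ofReal_le_ofReal
        rw [tg_deriv α (by linarith : (0:ℝ) < r)]
        exact lhs_pointwise n hn ε hε α hα2 hr
    rw [lint_lhs ε hε _ _ (sq_nonneg α) (sq_nonneg (α+1))] at hb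
    exact hb
  -- lower bound for the RHS
  set B : ℝ := Kc n r₀ * (r₀ ^ (-ε) / ε) with hB
  have hRHS : ENNReal.ofReal B ≤ (∫⁻ r in Set.Ioi (1 : ℝ),
      ENNReal.ofReal (tg α r ^ 2 / schDelta n r ^ 2 * r ^ (n - 1)
        * Real.sqrt (r ^ (n - 2) / (r ^ (n - 2) - 1)))) := by
    have hsub : Set.Ioi r₀ ⊆ Set.Ioi (1:ℝ) := Set.Ioi_subset_Ioi (by linarith)
    have h1 : (∫⁻ r in Set.Ioi r₀,
        ENNReal.ofReal (tg α r ^ 2 / schDelta n r ^ 2 * r ^ (n - 1)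
          * Real.sqrt (r ^ (n - 2) / (r ^ (n - 2) - 1))))
        ≤ ∫⁻ r in Set.Ioi (1:ℝ),
            ENNReal.ofReal (tg α r ^ 2 / schDelta n r ^ 2 * r ^ (n - 1)
              * Real.sqrt (r ^ (n - 2) / (r ^ (n - 2) - 1))) :=
      lintegral_mono_set hsub
    have h2 : (∫⁻ r in Set.Ioi r₀, ENNReal.ofReal (Kc n r₀ * r ^ (-1-ε)))
        ≤ ∫⁻ r in Set.Ioi r₀,
            ENNReal.ofReal (tg α r ^ 2 / schDelta n r ^ 2 * r ^ (n - 1)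
              * Real.sqrt (r ^ (n - 2) / (r ^ (n - 2) - 1))) := by
      apply setLIntegral_mono (rhs_integrand_measurable n α)
      intro r hr
      rw [Set.mem_Ioi] at hr
      exact ENNReal.ofReal_le_ofReal (rhs_pointwise n hn ε hε α hα2 r₀ hr₀2 hr)
    have h3 : (∫⁻ r in Set.Ioi r₀, ENNReal.ofReal (Kc n r₀ * r ^ (-1-ε)))
        = ENNReal.ofReal B := by
      rw [lint_rpow (-1-ε) (by linarith) r₀ hr₀pos (Kc n r₀) hKpos.le]
      congr 1
      rw [hB]
      congr 1
      rw [show (-1-ε+1 : ℝ) = -ε by ring]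
      field_simp
    calc ENNReal.ofReal B = ∫⁻ r in Set.Ioi r₀, ENNReal.ofReal (Kc n r₀ * r ^ (-1-ε)) := h3.symm
      _ ≤ _ := le_trans h2 h1
  -- the strict numeric inequality A < c * B
  have hr₀ε : (0:ℝ) < r₀ ^ (-ε) := Real.rpow_pos_of_pos hr₀pos _
  have hcB : 0 < c * B := by
    rw [hB]
    apply mul_pos hc (mul_pos hKpos (div_pos hr₀ε hε))
  have hAcB : A < c * B := by
    have h1 : α^2 + ε * (α+1)^2 / 2 < c * Kc n r₀ * r₀ ^ (-ε) := by
      have : m * r₀ ^ (-ε) < c * Kc n r₀ * r₀ ^ (-ε) :=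
        mul_lt_mul_of_pos_right hmcK hr₀ε
      linarith
    have h2 := mul_lt_mul_of_pos_right h1 (inv_pos.mpr hε)
    have e1 : (α^2 + ε * (α+1)^2 / 2) * ε⁻¹ = A := by
      rw [hA]; field_simp
    have e2 : (c * Kc n r₀ * r₀ ^ (-ε)) * ε⁻¹ = c * B := by
      rw [hB]; field_simp
    rw [e1, e2] at h2
    exact h2
  -- contradiction
  have hchain : (∫⁻ r in Set.Ioi (1 : ℝ),
      ENNReal.ofReal (deriv (tg α) r ^ 2 * r ^ (n - 1)
        * Real.sqrt ((r ^ (n - 2) - 1) / r ^ (n - 2))))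
      < ENNReal.ofReal c * (∫⁻ r in Set.Ioi (1 : ℝ),
          ENNReal.ofReal (tg α r ^ 2 / schDelta n r ^ 2 * r ^ (n - 1)
            * Real.sqrt (r ^ (n - 2) / (r ^ (n - 2) - 1)))) := by
    calc (∫⁻ r in Set.Ioi (1 : ℝ),
        ENNReal.ofReal (deriv (tg α) r ^ 2 * r ^ (n - 1)
          * Real.sqrt ((r ^ (n - 2) - 1) / r ^ (n - 2))))
        ≤ ENNReal.ofReal A := hLHS
      _ < ENNReal.ofReal (c * B) := by
          rw [ENNReal.ofReal_lt_ofReal_iff hcB]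
          exact hAcB
      _ = ENNReal.ofReal c * ENNReal.ofReal B := ENNReal.ofReal_mul hc.le
      _ ≤ _ := mul_le_mul_right hRHS _
  exact absurd hmain (not_le.mpr hchain)
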